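/- Let d ≥ 1, λ ∈ [0,1), and let (X_n) be the biased random walk RW_λ on ℤ^d, and (Z_n) the drifted random walk with steps +e_i w.p. 1/(d(1+λ)) and −e_i w.p. λ/(d(1+λ)). Then for every k ∈ ℤ_+^d and n ≥ 0, P_0(X_n = k) ≤ P(Z_n = k | Z_0 = 0). -/
import Mathlib

open scoped Classical

/-- The step `±e_i`. -/
def stepVec (d : ℕ) (i : Fin d) (b : Bool) : Fin d → ℤ :=
  fun j => if j = i then (if b then 1 else -1) else 0

/-- Step probability of the drifted random walk. -/
noncomputable def stepProb (d : ℕ) (lam : ℝ) (b : Bool) : ℝ :=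
  if b then 1 / (d * (1 + lam)) else lam / (d * (1 + lam))

/-- `P(Z_n = k | Z_0 = 0)` for the drifted random walk. -/
noncomputable def ZProb (d : ℕ) (lam : ℝ) (n : ℕ) (k : Fin d → ℤ) : ℝ :=
  ∑ ω : Fin n → Fin d × Bool,
    (∏ j, stepProb d lam (ω j).2) *
      (if (∑ j, stepVec d (ω j).1 (ω j).2) = k then 1 else 0)

/-- Transition probability of `RW_λ` on `ℤ^d` for nearest-neighbor pairs. -/
noncomputable def ptrans (d : ℕ) (lam : ℝ) (v u : Fin d → ℤ) : ℝ :=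
  if (∑ i, |u i|) < (∑ i, |v i|) then
    lam / (2 * d + (lam - 1) * ((d : ℝ) - (Finset.univ.filter (fun i => v i = 0)).card))
  else
    1 / (2 * d + (lam - 1) * ((d : ℝ) - (Finset.univ.filter (fun i => v i = 0)).card))

/-- Position after `j` steps of the path encoded by `ω`, started at the origin. -/
def Xpos (d n : ℕ) (ω : Fin n → Fin d × Bool) (j : ℕ) : Fin d → ℤ :=
  ∑ l : Fin n, if (l : ℕ) < j then stepVec d (ω l).1 (ω l).2 else 0

/-- `P_0(X_n = k)` for the biased random walk `RW_λ`, as a sum over paths. -/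
noncomputable def XProb (d : ℕ) (lam : ℝ) (n : ℕ) (k : Fin d → ℤ) : ℝ :=
  ∑ ω : Fin n → Fin d × Bool,
    (∏ j : Fin n, ptrans d lam (Xpos d n ω j) (Xpos d n ω (j + 1))) *
      (if Xpos d n ω n = k then 1 else 0)

/- ### Auxiliary lemmas -/

lemma Xpos_zero (d n : ℕ) (ω : Fin n → Fin d × Bool) : Xpos d n ω 0 = 0 := by
  simp [Xpos]

lemma Xpos_succ (d n : ℕ) (ω : Fin n → Fin d × Bool) (j : Fin n) :
    Xpos d n ω (j + 1) = Xpos d n ω j + stepVec d (ω j).1 (ω j).2 := by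
  unfold Xpos
  have h1 : ∀ l : Fin n, (if (l:ℕ) < (j:ℕ) + 1 then stepVec d (ω l).1 (ω l).2 else 0)
      = (if (l:ℕ) < j then stepVec d (ω l).1 (ω l).2 else 0)
        + (if l = j then stepVec d (ω l).1 (ω l).2 else 0) := by
    intro l
    rcases lt_trichotomy (l:ℕ) (j:ℕ) with h | h | h
    · rw [if_pos (by omega), if_pos h, if_neg (by rw [Fin.ext_iff]; omega), add_zero]
    · rw [if_pos (by omega), if_neg (by omega), if_pos (by rwa [Fin.ext_iff]), zero_add]
    · rw [if_neg (by omega), if_neg (by omega), if_neg (by rw [Fin.ext_iff]; omega), add_zero]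
  rw [Finset.sum_congr rfl (fun l _ => h1 l), Finset.sum_add_distrib,
    Finset.sum_ite_eq' Finset.univ j, if_pos (Finset.mem_univ j)]

lemma Xpos_top (d n : ℕ) (ω : Fin n → Fin d × Bool) :
    Xpos d n ω n = ∑ l, stepVec d (ω l).1 (ω l).2 := by
  unfold Xpos
  exact Finset.sum_congr rfl (fun l _ => if_pos l.isLt)

lemma abs_step (d : ℕ) (v : Fin d → ℤ) (i : Fin d) (b : Bool) :
    (∑ i', |(v + stepVec d i b) i'|) - ∑ i', |v i'| = 1 ∨
    (∑ i', |(v + stepVec d i b) i'|) - ∑ i', |v i'| = -1 := by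
  rw [← Finset.sum_sub_distrib]
  rw [Finset.sum_eq_single_of_mem i (Finset.mem_univ i)
    (by intro i' _ hne; simp [stepVec, hne])]
  simp only [Pi.add_apply, stepVec, if_pos rfl]
  cases b <;> simp only [if_true, if_false] <;>
    rw [Int.abs_eq_natAbs, Int.abs_eq_natAbs] <;> omega

lemma sum_step (d : ℕ) (v : Fin d → ℤ) (i : Fin d) (b : Bool) :
    (∑ i', (v + stepVec d i b) i') - ∑ i', v i' = if b then 1 else -1 := by
  rw [← Finset.sum_sub_distrib]
  rw [Finset.sum_eq_single_of_mem i (Finset.mem_univ i)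
    (by intro i' _ hne; simp [stepVec, hne])]
  simp [stepVec]

/-- The step `j` of the path `ω` decreases the ℓ¹-norm. -/
def decStep (d n : ℕ) (ω : Fin n → Fin d × Bool) (j : Fin n) : Prop :=
  (∑ i, |Xpos d n ω ((j : ℕ) + 1) i|) < ∑ i, |Xpos d n ω (j : ℕ) i|

/-- Denominator of the transition probability at step `j`. -/
noncomputable def den (d n : ℕ) (lam : ℝ) (ω : Fin n → Fin d × Bool) (j : Fin n) : ℝ :=
  2 * d + (lam - 1) * ((d : ℝ) - (Finset.univ.filter (fun i => Xpos d n ω j i = 0)).card)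

lemma ptrans_eq (d n : ℕ) (lam : ℝ) (ω : Fin n → Fin d × Bool) (j : Fin n) :
    ptrans d lam (Xpos d n ω j) (Xpos d n ω ((j : ℕ) + 1))
      = (if decStep d n ω j then lam else 1) * (1 / den d n lam ω j) := by
  unfold ptrans decStep den
  split_ifs <;> ring

lemma den_ge (d n : ℕ) (lam : ℝ) (h1 : lam ≤ 1) (ω : Fin n → Fin d × Bool) (j : Fin n) :
    (d : ℝ) * (1 + lam) ≤ den d n lam ω j := by
  have hz : ((Finset.univ.filter (fun i => Xpos d n ω j i = 0)).card : ℝ) ≤ d := by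
    have := (Finset.card_filter_le Finset.univ (fun i => Xpos d n ω (j:ℕ) i = 0))
    simp only [Finset.card_univ, Fintype.card_fin] at this
    exact_mod_cast this
  have hz0 : (0:ℝ) ≤ ((Finset.univ.filter (fun i => Xpos d n ω j i = 0)).card : ℝ) :=
    Nat.cast_nonneg _
  unfold den
  nlinarith

set_option maxHeartbeats 1000000 in
theorem stmt15 (d : ℕ) (hd : 1 ≤ d) (lam : ℝ) (h0 : 0 ≤ lam) (h1 : lam < 1)
    (n : ℕ) (k : Fin d → ℤ) (hk : ∀ i, 0 ≤ k i) :
    XProb d lam n k ≤ ZProb d lam n k := by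
  classical
  have hd' : (1:ℝ) ≤ d := by exact_mod_cast hd
  have hD : (0:ℝ) < (d:ℝ) * (1 + lam) := by nlinarith
  unfold XProb ZProb
  apply Finset.sum_le_sum
  intro ω _
  rw [Xpos_top]
  by_cases hkc : (∑ l, stepVec d (ω l).1 (ω l).2) = k
  swap
  · rw [if_neg hkc]; simp
  rw [if_pos hkc, mul_one, mul_one]
  -- rewrite both products
  have hXn : Xpos d n ω n = k := by rw [Xpos_top]; exact hkc
  -- counting: number of decreasing steps = number of `false` steps
  have habs : ∀ j : Fin n,
      (∑ i, |Xpos d n ω ((j:ℕ)+1) i|) - (∑ i, |Xpos d n ω (j:ℕ) i|)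
        = 1 - 2 * (if decStep d n ω j then 1 else 0) := by
    intro j
    have h := abs_step d (Xpos d n ω j) (ω j).1 (ω j).2
    rw [← Xpos_succ] at h
    by_cases hp : decStep d n ω j
    · rw [if_pos hp]
      unfold decStep at hp
      rcases h with h | h <;> omega
    · rw [if_neg hp]
      unfold decStep at hp
      rcases h with h | h <;> omega
  have hsum : ∀ j : Fin n,
      (∑ i, Xpos d n ω ((j:ℕ)+1) i) - (∑ i, Xpos d n ω (j:ℕ) i)
        = 1 - 2 * (if (ω j).2 = false then 1 else 0) := by
    intro j
    have h := sum_step d (Xpos d n ω j) (ω j).1 (ω j).2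
    rw [← Xpos_succ] at h
    cases hb : (ω j).2 <;> rw [hb] at h <;> simp [h]
  have tele : ∀ f : ℕ → ℤ, (∑ j : Fin n, (f ((j:ℕ)+1) - f (j:ℕ))) = f n - f 0 := by
    intro f
    rw [Fin.sum_univ_eq_sum_range (fun m => f (m+1) - f m) n]
    exact Finset.sum_range_sub f n
  have hcount : ∀ (p : Fin n → Prop) (hp : DecidablePred p),
      ∑ j : Fin n, ((1:ℤ) - 2 * (@ite ℤ (p j) (hp j) 1 0))
      = (n:ℤ) - 2 * (((@Finset.filter _ p hp) Finset.univ).card : ℤ) := by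
    intro p hp
    rw [Finset.sum_sub_distrib, Finset.sum_const, ← Finset.mul_sum, Finset.sum_boole]
    simp [Finset.card_univ]
  have hF : (∑ i, |Xpos d n ω n i|) - (∑ i, |Xpos d n ω 0 i|)
      = (n:ℤ) - 2 * ((Finset.univ.filter (fun j => decStep d n ω j)).card : ℤ) :=
    ((tele (fun m => ∑ i, |Xpos d n ω m i|)).symm.trans
      (Finset.sum_congr rfl (fun j _ => habs j))).trans (hcount _ _)
  have hG : (∑ i, Xpos d n ω n i) - (∑ i, Xpos d n ω 0 i)
      = (n:ℤ) - 2 * ((Finset.univ.filter (fun j => (ω j).2 = false)).card : ℤ) :=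
    ((tele (fun m => ∑ i, Xpos d n ω m i)).symm.trans
      (Finset.sum_congr rfl (fun j _ => hsum j))).trans (hcount _ _)
  have hends : (∑ i, |Xpos d n ω n i|) - (∑ i, |Xpos d n ω 0 i|)
      = (∑ i, Xpos d n ω n i) - (∑ i, Xpos d n ω 0 i) := by
    rw [hXn, Xpos_zero]
    simp [abs_of_nonneg (hk _)]
  have hcard : (Finset.univ.filter (fun j => decStep d n ω j)).card
      = (Finset.univ.filter (fun j => (ω j).2 = false)).card := by
    have := hends
    rw [hF, hG] at this
    omega
  -- rewrite the LHS product
  have hL : (∏ j : Fin n, ptrans d lam (Xpos d n ω j) (Xpos d n ω ((j:ℕ) + 1)))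
      = lam ^ (Finset.univ.filter (fun j => decStep d n ω j)).card
        * ∏ j : Fin n, (1 / den d n lam ω j) := by
    rw [Finset.prod_congr rfl (fun j _ => ptrans_eq d n lam ω j),
      Finset.prod_mul_distrib, Finset.prod_ite, Finset.prod_const, Finset.prod_const_one,
      mul_one]
  have hstep' : ∀ b : Bool, stepProb d lam b
      = (if b = false then lam else 1) * (1 / ((d:ℝ) * (1 + lam))) := by
    intro b
    cases b
    · simpa [stepProb] using (div_eq_mul_one_div lam ((d:ℝ)*(1+lam)))
    · simp [stepProb]
  have hR : (∏ j : Fin n, stepProb d lam (ω j).2)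
      = lam ^ (Finset.univ.filter (fun j => (ω j).2 = false)).card
        * (1 / ((d:ℝ) * (1 + lam))) ^ n := by
    rw [Finset.prod_congr rfl (fun j _ => hstep' (ω j).2),
      Finset.prod_mul_distrib, Finset.prod_ite, Finset.prod_const, Finset.prod_const_one,
      mul_one, Finset.prod_const, Finset.card_univ, Fintype.card_fin]
  rw [hL, hR, ← hcard]
  apply mul_le_mul_of_nonneg_left _ (pow_nonneg h0 _)
  calc (∏ j : Fin n, (1 / den d n lam ω j))
      ≤ ∏ _j : Fin n, (1 / ((d:ℝ) * (1 + lam))) := by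
        apply Finset.prod_le_prod
        · intro j _
          exact (one_div_pos.mpr (hD.trans_le (den_ge d n lam h1.le ω j))).le
        · intro j _
          exact one_div_le_one_div_of_le hD (den_ge d n lam h1.le ω j)
    _ = (1 / ((d:ℝ) * (1 + lam))) ^ n := by
        rw [Finset.prod_const, Finset.card_univ, Fintype.card_fin]
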